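/- Let K be a finite extension of Q_p, Λ an open finite-index subgroup of K^×, and Y ⊆ K a finite union of sets of the form {t ∈ K : |α| □₁ |t−c| □₂ |β|, t−c ∈ λP_n} (cells), where □ᵢ is < or no condition. Then for every y ∈ K there exists γ ∈ ℕ such that Y ∩ B(y,γ) is a local Λ'-cone with origin y for Λ' = P_N, N the lcm of the occurring n's: that is, Y ∩ B(y,γ) = (y + C) ∩ B(y,γ) for some set C ⊆ K stable under multiplication by P_N. -/

import Mathlib

open Filter Topology
open scoped Pointwise

private lemma close_mul_close {K : Type*} [NormedField K] [IsUltrametricDist K]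
    {r : ℝ} (hr1 : r ≤ 1) {a b : K} (ha : ‖a - 1‖ ≤ r) (hb : ‖b - 1‖ ≤ r) :
    ‖a * b - 1‖ ≤ r := by
  have hbn : ‖b‖ ≤ 1 := by
    calc ‖b‖ = ‖(b - 1) + 1‖ := by ring_nf
    _ ≤ max ‖b - 1‖ ‖(1 : K)‖ := IsUltrametricDist.norm_add_le_max _ _
    _ ≤ 1 := by simp [max_le_iff, hb.trans hr1]
  have : a * b - 1 = (a - 1) * b + (b - 1) := by ring
  rw [this]
  refine (IsUltrametricDist.norm_add_le_max _ _).trans (max_le ?_ hb)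
  rw [norm_mul]
  calc ‖a - 1‖ * ‖b‖ ≤ r * 1 := by
        apply mul_le_mul ha hbn (norm_nonneg _) (le_trans (norm_nonneg _) ha)
  _ = r := mul_one r

private lemma close_pow_close {K : Type*} [NormedField K] [IsUltrametricDist K]
    {r : ℝ} (hr0 : 0 ≤ r) (hr1 : r ≤ 1) {a : K} (ha : ‖a - 1‖ ≤ r) (k : ℕ) :
    ‖a ^ k - 1‖ ≤ r := by
  induction k with
  | zero => simpa using hr0
  | succ k ih => rw [pow_succ]; exact close_mul_close hr1 ih ha

/-- Hensel-type lemma: elements close to 1 are n-th powers. -/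
lemma one_add_small_is_pow {K : Type*} [NormedField K] [CompleteSpace K] [IsUltrametricDist K]
    (n : ℕ) (hn : (n : K) ≠ 0) :
    ∃ ε : ℝ, 0 < ε ∧ ∀ t : K, ‖t‖ < ε → ∃ w : K, w ≠ 0 ∧ w ^ n = 1 + t := by
  set ν : ℝ := ‖(n : K)‖ with hν
  have hν0 : 0 < ν := norm_pos_iff.2 hn
  set r : ℝ := min ν 1 / 2 with hr
  have hr0 : 0 < r := by positivity
  have hrν : r < ν := by
    have := min_le_left ν (1:ℝ); rw [hr]; linarith
  have hr1 : r < 1 := by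
    have := min_le_right ν (1:ℝ); rw [hr]; linarith
  refine ⟨r * ν, by positivity, fun t ht => ?_⟩
  set a : K := 1 + t with ha
  set g : K → K := fun w => w - (w ^ n - a) / n with hg
  set s : Set K := Metric.closedBall (1 : K) r with hs
  have hmem : ∀ w : K, w ∈ s ↔ ‖w - 1‖ ≤ r := by
    intro w; rw [hs, Metric.mem_closedBall, dist_eq_norm]
  have hlip : ∀ w ∈ s, ∀ v ∈ s, ‖g w - g v‖ ≤ r / ν * ‖w - v‖ := by
    intro w hw v hv
    rw [hmem] at hw hv
    have hgeom : (∑ i ∈ Finset.range n, w ^ i * v ^ (n - 1 - i)) * (w - v) = w ^ n - v ^ n :=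
      geom_sum₂_mul w v n
    set S : K := ∑ i ∈ Finset.range n, w ^ i * v ^ (n - 1 - i) with hS
    have hid : g w - g v = (w - v) * (((n : K) - S) / n) := by
      rw [hg]
      field_simp
      rw [show (w - v) * ((n:K) - S) = (w - v) * (n:K) - S * (w - v) by ring, hgeom]
      ring
    have hnS : ‖(n : K) - S‖ ≤ r := by
      have : (n : K) - S = ∑ i ∈ Finset.range n, (1 - w ^ i * v ^ (n - 1 - i)) := by
        rw [hS, Finset.sum_sub_distrib, Finset.sum_const, Finset.card_range]
        simp
      rw [this]
      refine IsUltrametricDist.norm_sum_le_of_forall_le_of_nonneg hr0.le ?_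
      intro i _
      rw [norm_sub_rev]
      exact close_mul_close hr1.le (close_pow_close hr0.le hr1.le hw i)
        (close_pow_close hr0.le hr1.le hv _)
    rw [hid, norm_mul, mul_comm]
    apply mul_le_mul _ le_rfl (norm_nonneg _) (by positivity)
    rw [norm_div]
    exact div_le_div_of_nonneg_right hnS hν0.le
  -- maps to
  have hmaps : Set.MapsTo g s s := by
    intro w hw
    rw [hmem] at hw ⊢
    have h1s : (1 : K) ∈ s := by rw [hmem]; simpa using hr0.le
    have hg1 : g 1 - 1 = t / n := by
      rw [hg, ha]; field_simp; ring
    have h2 : ‖g 1 - 1‖ ≤ r := by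
      rw [hg1, norm_div]
      rw [div_le_iff₀ hν0]
      exact le_of_lt (by simpa [mul_comm] using ht)
    have h3 : ‖g w - g 1‖ ≤ r := by
      refine (hlip w (by rwa [hmem]) 1 h1s).trans ?_
      calc r / ν * ‖w - 1‖ ≤ 1 * r := by
            apply mul_le_mul _ hw (norm_nonneg _) zero_le_one
            rw [div_le_one hν0]; exact hrν.le
      _ = r := one_mul r
    calc ‖g w - 1‖ ≤ max ‖g w - g 1‖ ‖g 1 - 1‖ := by
          rw [show g w - 1 = (g w - g 1) + (g 1 - 1) by ring] at *
          exact IsUltrametricDist.norm_add_le_max _ _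
    _ ≤ r := max_le h3 h2
  set cc : NNReal := Real.toNNReal (r / ν) with hcc
  have hcoe : (cc : ℝ) = r / ν := Real.coe_toNNReal _ (by positivity)
  have hlips : LipschitzOnWith cc g s := LipschitzOnWith.of_dist_le_mul (fun x hx y hy => by
    rw [dist_eq_norm, dist_eq_norm, hcoe]; exact hlip x hx y hy)
  have hcontr : ContractingWith cc (hmaps.restrict g s s) := by
    refine ⟨?_, hlips.mapsToRestrict hmaps⟩
    have : (cc : ℝ) < 1 := by rw [hcoe, div_lt_one hν0]; exact hrν
    exact_mod_cast this
  have h1s : (1 : K) ∈ s := by rw [hmem]; simpa using hr0.le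
  obtain ⟨w, hws, hfix, -, -⟩ := hcontr.exists_fixedPoint'
    Metric.isClosed_closedBall.isComplete hmaps h1s (edist_ne_top _ _)
  refine ⟨w, ?_, ?_⟩
  · rintro rfl
    rw [hmem] at hws
    simp at hws
    linarith
  · have hfx : g w = w := hfix
    rw [hg] at hfx
    simp only [sub_eq_self] at hfx
    rw [div_eq_zero_iff] at hfx
    rcases hfx with h | h
    · exact sub_eq_zero.1 h
    · exact absurd h hn


private lemma stab_smul {K : Type*} [Field K] {n N : ℕ} (h : n ∣ N) (l : K) :
    ∀ u : K, (∃ w : K, w ≠ 0 ∧ w ^ N = u) →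
      ∀ t ∈ l • {x : K | ∃ w : K, w ≠ 0 ∧ w ^ n = x},
        u * t ∈ l • {x : K | ∃ w : K, w ≠ 0 ∧ w ^ n = x} := by
  rintro u ⟨w, hw, rfl⟩ t ht
  obtain ⟨x, ⟨v, hv, rfl⟩, rfl⟩ := Set.mem_smul_set.1 ht
  obtain ⟨k, rfl⟩ := h
  refine Set.mem_smul_set.2 ⟨(w ^ k * v) ^ n, ⟨w ^ k * v, mul_ne_zero (pow_ne_zero _ hw) hv, rfl⟩, ?_⟩
  simp only [smul_eq_mul]
  rw [mul_pow, ← pow_mul, Nat.mul_comm k n]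
  ring

/-- a finite union `Y ⊆ K` of cells
`{t : |α| □₁ |t-c| □₂ |t-c| ∈ λ•P_n}` is, around every point `y ∈ K`, a local
`P_N`-cone with origin `y`, where `N` is the lcm of the occurring `n`'s:
`Y ∩ B(y,γ) = (y + C) ∩ B(y,γ)` for some set `C` stable under multiplication
by nonzero `N`-th powers. -/
theorem stmt_17 {p : ℕ} [Fact (Nat.Prime p)] (K : Type*) [NormedField K]
    [Algebra ℚ_[p] K] [FiniteDimensional ℚ_[p] K] [IsUltrametricDist K]
    (hext : ∀ x : ℚ_[p], ‖algebraMap ℚ_[p] K x‖ = ‖x‖)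
    (q : ℕ) (hq : 1 < q)
    (ord : K → ℤ)
    (hord : ∀ x : K, x ≠ 0 → ‖x‖ = (q : ℝ) ^ (-(ord x)))
    (m : ℕ) (c lam α β : Fin m → K) (nn : Fin m → ℕ)
    (hnn : ∀ i, 0 < nn i) (hα : ∀ i, α i ≠ 0) (hβ : ∀ i, β i ≠ 0)
    (cond1 cond2 : Fin m → Bool)
    (Y : Set K)
    (hY : Y = ⋃ i : Fin m, {t : K |
      (cond1 i = true → ‖α i‖ < ‖t - c i‖) ∧
      (cond2 i = true → ‖t - c i‖ < ‖β i‖) ∧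
      t - c i ∈ lam i • {x : K | ∃ w : K, w ≠ 0 ∧ w ^ (nn i) = x}}) :
    ∀ y : K, ∃ γ : ℕ, ∃ C : Set K,
      (∀ u : K, (∃ w : K, w ≠ 0 ∧ w ^ (Finset.univ.lcm nn) = u) →
        ∀ t ∈ C, u * t ∈ C) ∧
      Y ∩ {t : K | t = y ∨ (γ : ℤ) ≤ ord (t - y)} =
        ((fun t => y + t) '' C) ∩ {t : K | t = y ∨ (γ : ℤ) ≤ ord (t - y)} := by
  intro y
  have hq1 : (1:ℝ) < (q:ℝ) := by exact_mod_cast hq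
  have hq0 : (0:ℝ) < (q:ℝ) := lt_trans one_pos hq1
  letI : NormedSpace ℚ_[p] K :=
    { norm_smul_le := fun x k => by rw [Algebra.smul_def, norm_mul, hext] }
  haveI : CompleteSpace K := FiniteDimensional.complete ℚ_[p] K
  haveI : CharZero K := charZero_of_injective_algebraMap (algebraMap ℚ_[p] K).injective
  have hball : ∀ (γ : ℕ) (t : K), t ≠ y →
      (((γ:ℤ) ≤ ord (t - y)) ↔ ‖t - y‖ ≤ (q:ℝ) ^ (-(γ:ℤ))) := by
    intro γ t ht
    rw [hord _ (sub_ne_zero.2 ht), zpow_le_zpow_iff_right₀ hq1, neg_le_neg_iff]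
  have hsmall : ∀ ε : ℝ, 0 < ε → ∃ γ : ℕ, (q:ℝ) ^ (-(γ:ℤ)) < ε := by
    intro ε hε
    obtain ⟨γ, hγ⟩ := exists_pow_lt_of_lt_one hε
      (show (q:ℝ)⁻¹ < 1 by rw [inv_lt_one_iff₀]; right; exact hq1)
    exact ⟨γ, by rwa [zpow_neg, zpow_natCast, ← inv_pow]⟩
  have hmono : ∀ {γ γ' : ℕ}, γ ≤ γ' → (q:ℝ) ^ (-(γ':ℤ)) ≤ (q:ℝ) ^ (-(γ:ℤ)) := by
    intro γ γ' h
    exact zpow_le_zpow_right₀ hq1.le (by exact_mod_cast neg_le_neg (Int.ofNat_le.2 h))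
  have Hcell : ∀ i : Fin m, ∃ γ0 : ℕ, ∃ Ci : Set K,
      (∀ u : K, (∃ w : K, w ≠ 0 ∧ w ^ (Finset.univ.lcm nn) = u) → ∀ t ∈ Ci, u * t ∈ Ci) ∧
      ∀ γ : ℕ, γ0 ≤ γ →
        {t : K | (cond1 i = true → ‖α i‖ < ‖t - c i‖) ∧
          (cond2 i = true → ‖t - c i‖ < ‖β i‖) ∧
          t - c i ∈ lam i • {x : K | ∃ w : K, w ≠ 0 ∧ w ^ (nn i) = x}} ∩
          {t : K | t = y ∨ (γ : ℤ) ≤ ord (t - y)} =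
        ((fun t => y + t) '' Ci) ∩ {t : K | t = y ∨ (γ : ℤ) ≤ ord (t - y)} := by
    intro i
    rcases eq_or_ne y (c i) with hyc | hyc
    · rcases Bool.eq_false_or_eq_true (cond1 i) with hc1 | hc1
      · -- y = c i, with lower bound: empty
        obtain ⟨γ0, hγ0⟩ := hsmall ‖α i‖ (norm_pos_iff.2 (hα i))
        refine ⟨γ0, ∅, by simp, fun γ hγ => ?_⟩
        rw [Set.image_empty, Set.empty_inter, Set.eq_empty_iff_forall_notMem]
        rintro t ⟨⟨h1, h2, h3⟩, hB⟩
        have hlt : ‖t - c i‖ < ‖α i‖ := by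
          rcases eq_or_ne t y with rfl | hty
          · rw [← hyc, sub_self, norm_zero]; exact norm_pos_iff.2 (hα i)
          · rw [← hyc]
            calc ‖t - y‖ ≤ (q:ℝ) ^ (-(γ:ℤ)) := (hball γ t hty).1 (hB.resolve_left hty)
            _ ≤ (q:ℝ) ^ (-(γ0:ℤ)) := hmono hγ
            _ < ‖α i‖ := hγ0
        exact absurd (h1 hc1) (not_lt.2 hlt.le)
      · -- y = c i, no lower bound: C = lam i • P_{nn i}
        obtain ⟨γ0, hγ0⟩ := hsmall ‖β i‖ (norm_pos_iff.2 (hβ i))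
        refine ⟨γ0, lam i • {x : K | ∃ w : K, w ≠ 0 ∧ w ^ (nn i) = x},
          stab_smul (Finset.dvd_lcm (Finset.mem_univ i)) _, fun γ hγ => ?_⟩
        ext t
        simp only [Set.mem_inter_iff, Set.mem_setOf_eq, Set.mem_image]
        constructor
        · rintro ⟨⟨h1, h2, h3⟩, hB⟩
          exact ⟨⟨t - c i, h3, by rw [hyc]; ring⟩, hB⟩
        · rintro ⟨⟨s, hs, rfl⟩, hB⟩
          have hsc : y + s - c i = s := by rw [hyc]; ring
          refine ⟨⟨fun h => by rw [hc1] at h; exact absurd h (by simp), fun _ => ?_, ?_⟩, hB⟩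
          · rw [hsc]
            rcases eq_or_ne s 0 with rfl | hs0
            · rw [norm_zero]; exact norm_pos_iff.2 (hβ i)
            · have hty : y + s ≠ y := by simpa using hs0
              have hle := (hball γ (y + s) hty).1 (hB.resolve_left hty)
              rw [add_sub_cancel_left] at hle
              calc ‖s‖ ≤ (q:ℝ) ^ (-(γ:ℤ)) := hle
              _ ≤ (q:ℝ) ^ (-(γ0:ℤ)) := hmono hγ
              _ < ‖β i‖ := hγ0
          · rw [hsc]; exact hs
    · -- y ≠ c i
      have hd : y - c i ≠ 0 := sub_ne_zero.2 hyc
      have hdn : (0:ℝ) < ‖y - c i‖ := norm_pos_iff.2 hd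
      obtain ⟨ε, hε, hpow⟩ := one_add_small_is_pow (K := K) (nn i)
        (Nat.cast_ne_zero.2 (hnn i).ne')
      obtain ⟨γ0, hγ0⟩ := hsmall (min (ε * ‖y - c i‖) ‖y - c i‖)
        (lt_min (by positivity) hdn)
      have main : ∀ γ : ℕ, γ0 ≤ γ → ∀ t : K, (t = y ∨ (γ:ℤ) ≤ ord (t - y)) →
          ‖t - c i‖ = ‖y - c i‖ ∧
          ((t - c i ∈ lam i • {x : K | ∃ w : K, w ≠ 0 ∧ w ^ (nn i) = x}) ↔
            (y - c i ∈ lam i • {x : K | ∃ w : K, w ≠ 0 ∧ w ^ (nn i) = x})) := by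
        intro γ hγ t hB
        rcases eq_or_ne t y with rfl | hty
        · exact ⟨rfl, Iff.rfl⟩
        · have hbound : ‖t - y‖ < min (ε * ‖y - c i‖) ‖y - c i‖ :=
            lt_of_le_of_lt (((hball γ t hty).1 (hB.resolve_left hty)).trans (hmono hγ)) hγ0
          set e : K := (t - y) / (y - c i) with he
          have he1 : ‖e‖ < ε := by
            rw [he, norm_div, div_lt_iff₀ hdn]
            exact hbound.trans_le (min_le_left _ _)
          have he2 : ‖e‖ < 1 := by
            rw [he, norm_div, div_lt_one hdn]
            exact hbound.trans_le (min_le_right _ _)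
          obtain ⟨w, hw, hwn⟩ := hpow e he1
          have hu0 : (1 : K) + e ≠ 0 := by rw [← hwn]; exact pow_ne_zero _ hw
          have hunorm : ‖(1:K) + e‖ = 1 := by
            have hne : ‖(1:K)‖ ≠ ‖e‖ := by rw [norm_one]; exact (ne_of_gt he2)
            rw [IsUltrametricDist.norm_add_eq_max_of_norm_ne_norm hne, norm_one,
              max_eq_left he2.le]
          have htc : t - c i = (y - c i) * (1 + e) := by
            rw [he]; field_simp; ring
          constructor
          · rw [htc, norm_mul, hunorm, mul_one]
          · constructor
            · intro hmem
              obtain ⟨x, ⟨v, hv, rfl⟩, hx⟩ := Set.mem_smul_set.1 hmem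
              rw [smul_eq_mul] at hx
              have h2 : lam i * v ^ nn i = (y - c i) * (1 + e) := by rw [hx, htc]
              refine Set.mem_smul_set.2 ⟨(v / w) ^ nn i,
                ⟨v / w, div_ne_zero hv hw, rfl⟩, ?_⟩
              rw [smul_eq_mul, div_pow, hwn]
              field_simp
              linear_combination h2
            · intro hmem
              obtain ⟨x, ⟨v, hv, rfl⟩, hx⟩ := Set.mem_smul_set.1 hmem
              rw [smul_eq_mul] at hx
              refine Set.mem_smul_set.2 ⟨(v * w) ^ nn i,
                ⟨v * w, mul_ne_zero hv hw, rfl⟩, ?_⟩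
              rw [smul_eq_mul, mul_pow, hwn, htc, ← hx]
              ring
      rcases Classical.em ((cond1 i = true → ‖α i‖ < ‖y - c i‖) ∧
          (cond2 i = true → ‖y - c i‖ < ‖β i‖) ∧
          y - c i ∈ lam i • {x : K | ∃ w : K, w ≠ 0 ∧ w ^ (nn i) = x}) with hy | hy
      · refine ⟨γ0, Set.univ, by simp, fun γ hγ => ?_⟩
        ext t
        simp only [Set.mem_inter_iff, Set.mem_setOf_eq, Set.mem_image, Set.mem_univ,
          true_and]
        constructor
        · rintro ⟨-, hB⟩; exact ⟨⟨t - y, by ring⟩, hB⟩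
        · rintro ⟨-, hB⟩
          obtain ⟨hne, heqv⟩ := main γ hγ t hB
          exact ⟨⟨fun h => by rw [hne]; exact hy.1 h, fun h => by rw [hne]; exact hy.2.1 h,
            heqv.2 hy.2.2⟩, hB⟩
      · refine ⟨γ0, ∅, by simp, fun γ hγ => ?_⟩
        rw [Set.image_empty, Set.empty_inter, Set.eq_empty_iff_forall_notMem]
        rintro t ⟨⟨h1, h2, h3⟩, hB⟩
        obtain ⟨hne, heqv⟩ := main γ hγ t hB
        exact hy ⟨fun h => by rw [← hne]; exact h1 h, fun h => by rw [← hne]; exact h2 h,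
          heqv.1 h3⟩
  choose γi Ci hstab hCeq using Hcell
  refine ⟨Finset.univ.sup γi, ⋃ i, Ci i, ?_, ?_⟩
  · rintro u hu t ht
    obtain ⟨i, hti⟩ := Set.mem_iUnion.1 ht
    exact Set.mem_iUnion.2 ⟨i, hstab i u hu t hti⟩
  · rw [hY, Set.iUnion_inter, Set.image_iUnion, Set.iUnion_inter]
    exact Set.iUnion_congr fun i => hCeq i _ (Finset.le_sup (Finset.mem_univ i))
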